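/- Let G be a finite simple graph, let P ⊆ V(G) be nonempty with the induced subgraph G[P] connected, and let Ĝ be the 1-hop extension of P in G. Let s be a vertex of Ĝ and let c ≥ 1 be an integer such that some vertex of Ĝ is at distance exactly c from s in Ĝ. Then there exists a set T ⊆ P such that: (1) 6·|T| ≥ c; (2) dist_Ĝ(s, x) ≤ c for every x ∈ T; and (3) for any two distinct x, y ∈ T, the closed neighborhoods N_G[x] and N_G[y] are disjoint. -/

import Mathlib

lemma walk_prefix {V : Type*} {G : SimpleGraph V} {u v : V} (w : G.Walk u v) (i : ℕ) :
    ∃ p : G.Walk u (w.getVert i), p.length ≤ i := by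
  induction w generalizing i with
  | nil => exact ⟨SimpleGraph.Walk.nil, Nat.zero_le _⟩
  | cons h q ih =>
    cases i with
    | zero => exact ⟨SimpleGraph.Walk.nil, Nat.zero_le _⟩
    | succ i =>
      obtain ⟨p, hp⟩ := ih i
      exact ⟨p.cons h, by simpa using hp⟩

lemma walk_suffix {V : Type*} {G : SimpleGraph V} {u v : V} (w : G.Walk u v) (i : ℕ) :
    ∃ p : G.Walk (w.getVert i) v, p.length ≤ w.length - i := by
  induction w generalizing i with
  | nil => exact ⟨SimpleGraph.Walk.nil, Nat.zero_le _⟩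
  | cons h q ih =>
    cases i with
    | zero => exact ⟨SimpleGraph.Walk.cons h q, le_of_eq rfl⟩
    | succ i =>
      obtain ⟨p, hp⟩ := ih i
      refine ⟨p, ?_⟩
      simp only [SimpleGraph.Walk.length_cons]
      exact le_trans hp (by omega)



/-- The 1-hop extension of a vertex set `P` in `G`: the subgraph of `G` consisting of
all edges of `G` with at least one endpoint in `P` (modeled as a graph on the same
vertex type; vertices outside the closed neighborhood of `P` are isolated). -/
def oneHopExt {V : Type*} (G : SimpleGraph V) (P : Set V) : SimpleGraph V where
  Adj u v := G.Adj u v ∧ (u ∈ P ∨ v ∈ P)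
  symm := ⟨fun u v h => ⟨h.1.symm, h.2.symm⟩⟩
  loopless := ⟨fun v h => G.loopless.irrefl v h.1⟩

/-- The closed neighborhood `N⁺(P) = P ∪ N(P)` of a vertex set `P`; this is the vertex
set of the 1-hop extension of `P`. -/
def nbhdPlus {V : Type*} (G : SimpleGraph V) (P : Set V) : Set V :=
  P ∪ {v | ∃ p ∈ P, G.Adj p v}

/-- The closed neighborhood `N_G[v] = {v} ∪ N_G(v)` of a vertex. -/
def closedNbhd {V : Type*} (G : SimpleGraph V) (v : V) : Set V :=
  insert v (G.neighborSet v)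

/-- Existence of terminal sets: if `Ĝ` is the 1-hop extension of a nonempty connected
set `P`, `s` a vertex of `Ĝ`, and some vertex of `Ĝ` is at distance exactly `c ≥ 1`
from `s` in `Ĝ`, then there is a set `T ⊆ P` with `6|T| ≥ c`, all of whose elements are
within distance `c` of `s` in `Ĝ` and have pairwise disjoint closed neighborhoods
in `G`. -/
theorem terminal_set_exists {V : Type*} [Fintype V] (G : SimpleGraph V)
    (P : Set V) (hPne : P.Nonempty) (hPconn : (G.induce P).Connected)
    (s : V) (hs : s ∈ nbhdPlus G P)
    (c : ℕ) (hc : 1 ≤ c) (hfar : ∃ v : V, (oneHopExt G P).dist s v = c) :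
    ∃ T : Set V, T ⊆ P ∧ T.Finite ∧ c ≤ 6 * T.ncard ∧
      (∀ x ∈ T, (oneHopExt G P).dist s x ≤ c) ∧
      (∀ x ∈ T, ∀ y ∈ T, x ≠ y → Disjoint (closedNbhd G x) (closedNbhd G y)) := by
  classical
  set Gh := oneHopExt G P with hGh
  obtain ⟨v, hv⟩ := hfar
  have hne0 : Gh.dist s v ≠ 0 := by rw [hv]; omega
  obtain ⟨w, hw⟩ := SimpleGraph.exists_walk_of_dist_ne_zero hne0
  rw [hv] at hw
  set g : ℕ → V := fun i => w.getVert i with hg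
  have hedge : ∀ i, i < c → Gh.Adj (g i) (g (i + 1)) := fun i hi =>
    w.adj_getVert_succ (by omega)
  set j : ℕ → ℕ := fun k => if g (6 * k) ∈ P then 6 * k else 6 * k + 1 with hj
  set m : ℕ := (c - 1) / 6 + 1 with hm
  have hkc : ∀ k < m, 6 * k + 1 ≤ c := by
    intro k hk
    have := Nat.div_add_mod (c - 1) 6
    have := Nat.mod_lt (c - 1) (show 0 < 6 by norm_num)
    have hk' : k ≤ (c - 1) / 6 := by omega
    have : 6 * k ≤ 6 * ((c - 1) / 6) := by omega
    omega
  have hjbd : ∀ k, 6 * k ≤ j k ∧ j k ≤ 6 * k + 1 := by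
    intro k; simp only [hj]; split <;> omega
  have hjP : ∀ k < m, g (j k) ∈ P := by
    intro k hk
    simp only [hj]
    split
    · assumption
    · rcases (hedge (6 * k) (by have := hkc k hk; omega)).2 with h | h
      · exact absurd h (by assumption)
      · exact h
  have hjle : ∀ k < m, j k ≤ c := fun k hk => le_trans (hjbd k).2 (hkc k hk)
  -- key: any Gh-walk between g a and g b (a ≤ b ≤ c) has length ≥ b - a
  have key : ∀ a b : ℕ, a ≤ c → b ≤ c → ∀ q : Gh.Walk (g a) (g b), b ≤ a + q.length := by
    intro a b ha hb q
    obtain ⟨p, hp⟩ := walk_prefix w a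
    obtain ⟨r, hr⟩ := walk_suffix w b
    have hd := SimpleGraph.dist_le ((p.append q).append r)
    rw [hv] at hd
    simp only [SimpleGraph.Walk.length_append] at hd
    rw [hw] at hr
    omega
  -- separation
  have hsep : ∀ k l, k < m → l < m → k < l →
      ∀ q : Gh.Walk (g (j k)) (g (j l)), 5 ≤ q.length := by
    intro k l hkm hlm hkl q
    have h1 := hjbd k; have h2 := hjbd l
    have := key (j k) (j l) (hjle k hkm) (hjle l hlm) q
    omega
  have hne : ∀ k l, k < m → l < m → k < l → g (j k) ≠ g (j l) := by
    intro k l hkm hlm hkl heq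
    have := hsep k l hkm hlm hkl (SimpleGraph.Walk.nil.copy heq.symm rfl)
    simp at this
  -- walk of length ≤ 2 between members sharing closed neighborhoods
  have hshort : ∀ k l, k < m → l < m → k ≠ l →
      Disjoint (closedNbhd G (g (j k))) (closedNbhd G (g (j l))) := by
    have main : ∀ k l, k < m → l < m → k < l →
        Disjoint (closedNbhd G (g (j k))) (closedNbhd G (g (j l))) := by
      intro k l hkm hlm hkl
      rw [Set.disjoint_left]
      rintro z hz1 hz2
      set x := g (j k); set y := g (j l)
      have hxP : x ∈ P := hjP k hkm
      have hyP : y ∈ P := hjP l hlm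
      have hxy : x ≠ y := hne k l hkm hlm hkl
      -- build a Gh-walk from x to y of length ≤ 2
      have : ∃ q : Gh.Walk x y, q.length ≤ 2 := by
        rcases hz1 with hz1 | hz1 <;> rcases hz2 with hz2 | hz2
        · exact absurd (hz1.symm ▸ hz2 : x = y) hxy
        · -- z = x, G.Adj y z
          have : Gh.Adj x y := ⟨(hz1 ▸ hz2 : G.Adj y x).symm, Or.inl hxP⟩
          exact ⟨SimpleGraph.Walk.cons this SimpleGraph.Walk.nil, by simp⟩
        · -- G.Adj x z, z = y
          have : Gh.Adj x y := ⟨hz2 ▸ hz1, Or.inl hxP⟩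
          exact ⟨SimpleGraph.Walk.cons this SimpleGraph.Walk.nil, by simp⟩
        · have h1 : Gh.Adj x z := ⟨hz1, Or.inl hxP⟩
          have h2 : Gh.Adj z y := ⟨hz2.symm, Or.inr hyP⟩
          exact ⟨SimpleGraph.Walk.cons h1 (SimpleGraph.Walk.cons h2 SimpleGraph.Walk.nil),
            by simp⟩
      obtain ⟨q, hq⟩ := this
      have := hsep k l hkm hlm hkl q
      omega
    intro k l hkm hlm hkl
    rcases lt_or_gt_of_ne hkl with h | h
    · exact main k l hkm hlm h
    · exact (main l k hlm hkm h).symm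
  refine ⟨↑((Finset.range m).image fun k => g (j k)), ?_, Finset.finite_toSet _,
    ?_, ?_, ?_⟩
  · intro x hx
    simp only [Finset.coe_image, Finset.coe_range, Set.mem_image, Set.mem_Iio] at hx
    obtain ⟨k, hk, rfl⟩ := hx
    exact hjP k hk
  · have hinj : Set.InjOn (fun k => g (j k)) ↑(Finset.range m) := by
      intro a ha b hb hab
      simp only [Finset.coe_range, Set.mem_Iio] at ha hb
      by_contra hne'
      rcases lt_or_gt_of_ne hne' with h | h
      · exact hne a b ha hb h hab
      · exact hne b a hb ha h hab.symm
    rw [Set.ncard_coe_finset, Finset.card_image_of_injOn hinj, Finset.card_range]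
    have := Nat.div_add_mod (c - 1) 6
    have := Nat.mod_lt (c - 1) (show 0 < 6 by norm_num)
    omega
  · intro x hx
    simp only [Finset.coe_image, Finset.coe_range, Set.mem_image, Set.mem_Iio] at hx
    obtain ⟨k, hk, rfl⟩ := hx
    obtain ⟨p, hp⟩ := walk_prefix w (j k)
    exact le_trans (SimpleGraph.dist_le p) (le_trans hp (hjle k hk))
  · intro x hx y hy hxy
    simp only [Finset.coe_image, Finset.coe_range, Set.mem_image, Set.mem_Iio] at hx hy
    obtain ⟨k, hk, rfl⟩ := hx
    obtain ⟨l, hl, rfl⟩ := hy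
    exact hshort k l hk hl (fun h => hxy (by rw [h]))
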